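/- arXiv:2206.14694 — 3 statements merged into one kernel-verified Lean document; each statement's English description precedes it below -/
import Mathlib

section
/- For the Bernoulli squirrel random walk with parameter p ∈ (0,1], the mean square displacement satisfies E[X_t²] = ((1-p)/p)·t - ((1-2p)/(2p²))·(1-(1-2p)^t) for all t ≥ 0. -/
set_option linter.unnecessarySeqFocus false


open MeasureTheory ProbabilityTheory Finset

private lemma icc_succ (t : ℕ) : Finset.Icc 1 (t+1) = insert (t+1) (Finset.Icc 1 t) := by
  ext x; simp [Finset.mem_Icc]; omega

private lemma geom_aux (p : ℝ) (hp : p ≠ 0) : ∀ t : ℕ,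
    ∑ r ∈ Finset.Icc 1 t, (1 - 2*p) ^ (t + 1 - r)
      = ((1 - 2*p) - (1 - 2*p)^(t+1)) / (2*p) := by
  intro t
  induction t with
  | zero => simp
  | succ t ih =>
    rw [icc_succ, Finset.sum_insert (by simp)]
    have h1 : ∑ r ∈ Finset.Icc 1 t, (1 - 2*p) ^ (t + 1 + 1 - r)
        = (∑ r ∈ Finset.Icc 1 t, (1 - 2*p) ^ (t + 1 - r)) * (1 - 2*p) := by
      rw [Finset.sum_mul]
      refine Finset.sum_congr rfl fun r hr => ?_
      have hr' : r ≤ t := (Finset.mem_Icc.mp hr).2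
      have : t + 1 + 1 - r = (t + 1 - r) + 1 := by omega
      rw [this, pow_succ]
    rw [h1, ih]
    have : t + 1 + 1 - (t + 1) = 1 := by omega
    rw [this]
    field_simp
    ring

private lemma dsum_aux (p : ℝ) (hp : p ≠ 0) : ∀ t : ℕ,
    ∑ r ∈ Finset.Icc 1 t, ∑ k ∈ Finset.Icc 1 t, (1 - 2*p) ^ ((k - r) + (r - k))
      = ((1 - p) / p) * t - ((1 - 2 * p) / (2 * p ^ 2)) * (1 - (1 - 2 * p) ^ t) := by
  intro t
  induction t with
  | zero => simp
  | succ t ih =>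
    have hcross : ∑ r ∈ Finset.Icc 1 t, (1 - 2*p) ^ ((t + 1 - r) + (r - (t+1)))
        = ((1 - 2*p) - (1 - 2*p)^(t+1)) / (2*p) := by
      rw [← geom_aux p hp t]
      refine Finset.sum_congr rfl fun r hr => ?_
      have hr' : r ≤ t := (Finset.mem_Icc.mp hr).2
      congr 1; omega
    rw [icc_succ, Finset.sum_insert (by simp), Finset.sum_insert (by simp),
      Finset.sum_congr rfl (fun r _ => Finset.sum_insert (by simp))]
    have e1 : ∑ k ∈ Finset.Icc 1 t, (1 - 2*p) ^ ((k - (t+1)) + ((t+1) - k))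
        = ((1 - 2*p) - (1 - 2*p)^(t+1)) / (2*p) := by
      rw [← hcross]; refine Finset.sum_congr rfl fun r hr => ?_; congr 1; omega
    have e2 : ∑ r ∈ Finset.Icc 1 t,
        ((1 - 2*p) ^ (((t+1) - r) + (r - (t+1)))
          + ∑ k ∈ Finset.Icc 1 t, (1 - 2*p) ^ ((k - r) + (r - k)))
        = ((1 - 2*p) - (1 - 2*p)^(t+1)) / (2*p)
          + (((1 - p) / p) * t - ((1 - 2 * p) / (2 * p ^ 2)) * (1 - (1 - 2 * p) ^ t)) := by
      rw [Finset.sum_add_distrib, hcross, ih]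
    rw [e1, e2]
    have h0 : (t + 1 : ℕ) - (t + 1) = 0 := by omega
    rw [h0]
    push_cast
    field_simp
    ring

/-- Mean square displacement of the Bernoulli squirrel random walk:
`E[X_t²] = ((1-p)/p) t - ((1-2p)/(2p²)) (1-(1-2p)^t)`. -/
theorem stmt_7 {Ω : Type*} [MeasurableSpace Ω] (P : Measure Ω) [IsProbabilityMeasure P]
    (p : ℝ) (hp : p ∈ Set.Ioc (0:ℝ) 1) (σ0 : ℝ) (hσ0 : σ0 ∈ ({-1, 1} : Set ℝ))
    (Z : ℕ → Ω → ℕ)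
    (hmeas : ∀ i, Measurable (Z i))
    (hind : iIndepFun Z P)
    (hval : ∀ i ω, Z i ω ≤ 1)
    (hber : ∀ i, P {ω | Z i ω = 1} = ENNReal.ofReal p) :
    ∀ t : ℕ,
      ∫ ω, (σ0 * ∑ r ∈ Finset.Icc 1 t, (-1 : ℝ) ^ (∑ k ∈ Finset.Icc 1 r, Z k ω)) ^ 2 ∂P
        = ((1 - p) / p) * t - ((1 - 2 * p) / (2 * p ^ 2)) * (1 - (1 - 2 * p) ^ t) := by
  intro t
  have hp0 : p ≠ 0 := ne_of_gt hp.1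
  set g : ℕ → Ω → ℝ := fun i ω => (-1 : ℝ) ^ (Z i ω) with hg_def
  -- basic facts about g
  have hg2 : ∀ i ω, g i ω * g i ω = 1 := by
    intro i ω
    simp only [hg_def, ← pow_add, ← two_mul, pow_mul]
    norm_num
  have hmg : ∀ i, Measurable (g i) := fun i =>
    (measurable_from_nat (f := fun n => ((-1 : ℝ)) ^ n)).comp (hmeas i)
  have habs : ∀ i ω, |g i ω| = 1 := by
    intro i ω; simp [hg_def, abs_pow]
  have hgint : ∀ i, Integrable (g i) P := by
    intro i
    refine Integrable.mono' (integrable_const (1:ℝ)) (hmg i).aestronglyMeasurable ?_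
    filter_upwards with ω
    rw [Real.norm_eq_abs, habs]
  -- expectation of g i
  have hEg : ∀ i, ∫ ω, g i ω ∂P = 1 - 2 * p := by
    intro i
    have hA : MeasurableSet {ω | Z i ω = 1} := by
      have := hmeas i (MeasurableSet.singleton 1)
      simpa [Set.preimage] using this
    have hrep : ∀ ω, g i ω = 1 - 2 * Set.indicator {ω | Z i ω = 1} (fun _ => (1:ℝ)) ω := by
      intro ω
      rcases Nat.le_one_iff_eq_zero_or_eq_one.mp (hval i ω) with h | h <;>
        simp [hg_def, Set.indicator_apply, h] <;> norm_num
    have hInd : Integrable (Set.indicator {ω | Z i ω = 1} (fun _ => (1:ℝ))) P :=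
      (integrable_const (1:ℝ)).indicator hA
    calc ∫ ω, g i ω ∂P
        = ∫ ω, (1 - 2 * Set.indicator {ω | Z i ω = 1} (fun _ => (1:ℝ)) ω) ∂P := by
          exact integral_congr_ae (Filter.Eventually.of_forall hrep)
      _ = (∫ _, (1:ℝ) ∂P) - ∫ ω, 2 * Set.indicator {ω | Z i ω = 1} (fun _ => (1:ℝ)) ω ∂P := by
          exact integral_sub (integrable_const 1) (hInd.const_mul 2)
      _ = 1 - 2 * (P {ω | Z i ω = 1}).toReal := by
          rw [integral_const, integral_const_mul, integral_indicator_const _ hA]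
          simp [Measure.real]
      _ = 1 - 2 * p := by
          rw [hber i, ENNReal.toReal_ofReal (le_of_lt hp.1)]
  -- independence of g
  have hgind : iIndepFun g P := by
    have := hind.comp (fun _ (n : ℕ) => ((-1 : ℝ)) ^ n) (fun _ => measurable_from_nat)
    exact this
  -- integrability of products
  have hprodint : ∀ S : Finset ℕ, Integrable (fun ω => ∏ i ∈ S, g i ω) P := by
    intro S
    refine Integrable.mono' (integrable_const (1:ℝ))
      (Finset.measurable_prod S fun i _ => hmg i).aestronglyMeasurable ?_
    filter_upwards with ω
    rw [Real.norm_eq_abs, Finset.abs_prod]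
    simp [habs]
  -- expectation of products
  have hEprod : ∀ S : Finset ℕ, ∫ ω, ∏ i ∈ S, g i ω ∂P = (1 - 2*p) ^ S.card := by
    intro S
    induction S using Finset.induction_on with
    | empty => simp
    | insert j S hj ih =>
      have hindep : IndepFun (∏ i ∈ S, g i) (g j) P :=
        hgind.indepFun_finset_prod_of_notMem hmg hj
      have hfun : (fun ω => ∏ i ∈ insert j S, g i ω)
          = fun ω => (∏ i ∈ S, g i) ω * g j ω := by
        funext ω
        simp [Finset.prod_insert hj, Finset.prod_apply, mul_comm]
      rw [hfun,
        show (fun ω => (∏ i ∈ S, g i) ω * g j ω) = (∏ i ∈ S, g i) * g j from rfl,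
        hindep.integral_mul_eq_mul_integral
          (Integrable.aestronglyMeasurable (by have := hprodint S; simpa [show (fun ω => ∏ i ∈ S, g i ω) = ∏ i ∈ S, g i from by funext ω; simp] using this)) (hgint j).aestronglyMeasurable]
      have : (∏ i ∈ S, g i) = fun ω => ∏ i ∈ S, g i ω := by
        funext ω; simp [Finset.prod_apply]
      rw [this, ih, hEg j, Finset.card_insert_of_notMem hj, pow_succ]
  -- product form of the walk increments
  have hfprod : ∀ r ω, (-1 : ℝ) ^ (∑ k ∈ Finset.Icc 1 r, Z k ω)
      = ∏ k ∈ Finset.Icc 1 r, g k ω := by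
    intro r ω
    rw [Finset.prod_pow_eq_pow_sum]
  -- cross products
  have hcross_pt : ∀ r k : ℕ, r ≤ k → ∀ ω,
      (∏ i ∈ Finset.Icc 1 r, g i ω) * ∏ i ∈ Finset.Icc 1 k, g i ω
        = ∏ i ∈ Finset.Ioc r k, g i ω := by
    intro r k hrk ω
    have hunion : Finset.Icc 1 k = Finset.Icc 1 r ∪ Finset.Ioc r k := by
      ext x; simp [Finset.mem_Icc, Finset.mem_Ioc]; omega
    have hdisj : Disjoint (Finset.Icc 1 r) (Finset.Ioc r k) := by
      simp [Finset.disjoint_left, Finset.mem_Icc, Finset.mem_Ioc]; omega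
    rw [hunion, Finset.prod_union hdisj, ← mul_assoc, ← Finset.prod_mul_distrib]
    have : ∏ i ∈ Finset.Icc 1 r, (g i ω * g i ω) = 1 :=
      Finset.prod_eq_one fun i _ => hg2 i ω
    rw [this, one_mul]
  have hEcross : ∀ r k : ℕ,
      ∫ ω, (∏ i ∈ Finset.Icc 1 r, g i ω) * ∏ i ∈ Finset.Icc 1 k, g i ω ∂P
        = (1 - 2*p) ^ ((k - r) + (r - k)) := by
    intro r k
    rcases le_total r k with h | h
    · rw [integral_congr_ae (Filter.Eventually.of_forall (hcross_pt r k h)),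
        hEprod (Finset.Ioc r k)]
      congr 1
      rw [Nat.card_Ioc]
      omega
    · have : ∀ ω, (∏ i ∈ Finset.Icc 1 r, g i ω) * ∏ i ∈ Finset.Icc 1 k, g i ω
          = ∏ i ∈ Finset.Ioc k r, g i ω := by
        intro ω; rw [mul_comm]; exact hcross_pt k r h ω
      rw [integral_congr_ae (Filter.Eventually.of_forall this), hEprod (Finset.Ioc k r)]
      congr 1
      rw [Nat.card_Ioc]
      omega
  -- integrability of cross products
  have hcrossint : ∀ r k : ℕ,
      Integrable (fun ω => (∏ i ∈ Finset.Icc 1 r, g i ω) * ∏ i ∈ Finset.Icc 1 k, g i ω) P := by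
    intro r k
    refine Integrable.mono' (integrable_const (1:ℝ))
      (((Finset.measurable_prod _ fun i _ => hmg i).mul
        (Finset.measurable_prod _ fun i _ => hmg i)).aestronglyMeasurable) ?_
    filter_upwards with ω
    rw [Real.norm_eq_abs, abs_mul, Finset.abs_prod, Finset.abs_prod]
    simp [habs]
  -- σ0² = 1
  have hσ : σ0 ^ 2 = 1 := by
    rcases hσ0 with h | h <;> rw [h] <;> norm_num
  -- main computation
  have hexp : ∀ ω, (σ0 * ∑ r ∈ Finset.Icc 1 t, (-1 : ℝ) ^ (∑ k ∈ Finset.Icc 1 r, Z k ω)) ^ 2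
      = ∑ r ∈ Finset.Icc 1 t, ∑ k ∈ Finset.Icc 1 t,
          (∏ i ∈ Finset.Icc 1 r, g i ω) * ∏ i ∈ Finset.Icc 1 k, g i ω := by
    intro ω
    rw [mul_pow, hσ, one_mul, sq, Finset.sum_mul_sum]
    refine Finset.sum_congr rfl fun r _ => Finset.sum_congr rfl fun k _ => ?_
    rw [hfprod, hfprod]
  rw [integral_congr_ae (Filter.Eventually.of_forall hexp),
    integral_finset_sum _ (fun r _ => integrable_finset_sum _ (fun k _ => hcrossint r k))]
  have : ∀ r ∈ Finset.Icc 1 t,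
      ∫ ω, ∑ k ∈ Finset.Icc 1 t,
          (∏ i ∈ Finset.Icc 1 r, g i ω) * ∏ i ∈ Finset.Icc 1 k, g i ω ∂P
        = ∑ k ∈ Finset.Icc 1 t, (1 - 2*p) ^ ((k - r) + (r - k)) := by
    intro r _
    rw [integral_finset_sum _ (fun k _ => hcrossint r k)]
    exact Finset.sum_congr rfl fun k _ => hEcross r k
  rw [Finset.sum_congr rfl this]
  exact dsum_aux p hp0 t
end

section
/- The only waiting-time density ψ on {1,2,...} whose associated squirrel random walk satisfies ⟨X_t⟩ = 0 for all t is the symmetric Bernoulli one with generating function ψ̄(u) = u/(2(1-u/2)), i.e. ψ(t) = 2^{-t}. -/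
/-- The only waiting-time generating function making the squirrel random walk
unbiased (`⟨X_t⟩ = 0` for all `t`, i.e. `X̄⁽¹⁾(u) ≡ 0`) is the symmetric Bernoulli
one, `ψ̄(u) = u/(2(1-u/2))`, whose coefficients are `ψ(t) = 2^{-t}`. -/
theorem stmt_12 :
    (∀ ψbar : ℝ → ℝ, (∀ u ∈ Set.Ico (0:ℝ) 1, 0 ≤ ψbar u) →
      (∀ u ∈ Set.Ico (0:ℝ) 1,
        (1 - ψbar u) / ((1 - u) ^ 2 * (1 + ψbar u)) - 1 / (1 - u) = 0) →
      ∀ u ∈ Set.Ico (0:ℝ) 1, ψbar u = u / (2 * (1 - u / 2))) ∧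
    (∀ u ∈ Set.Ico (0:ℝ) 1,
      ∑' t : ℕ, ((2:ℝ) ^ (t + 1))⁻¹ * u ^ (t + 1) = u / (2 * (1 - u / 2))) := by
  constructor
  · intro ψbar hpos heq u hu
    obtain ⟨hu0, hu1⟩ := hu
    have h1u : (0:ℝ) < 1 - u := by linarith
    have hψ : 0 ≤ ψbar u := hpos u ⟨hu0, hu1⟩
    have h1ψ : (0:ℝ) < 1 + ψbar u := by linarith
    have he := heq u ⟨hu0, hu1⟩
    have hd : ((1 - u) ^ 2 * (1 + ψbar u)) ≠ 0 := by positivity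
    have he2 : (1 - ψbar u) * (1 - u) = (1 - u) ^ 2 * (1 + ψbar u) := by
      field_simp at he
      linear_combination (1 - u) * he
    have h2u : (0:ℝ) < 2 * (1 - u / 2) := by linarith
    have key : ψbar u * (2 - u) = u := by nlinarith [sq_nonneg (1 - u)]
    rw [eq_div_iff (ne_of_gt h2u)]
    linear_combination key
  · intro u hu
    obtain ⟨hu0, hu1⟩ := hu
    have hr : |u / 2| < 1 := by rw [abs_of_nonneg (by linarith)]; linarith
    have h : ∀ t : ℕ, ((2:ℝ) ^ (t + 1))⁻¹ * u ^ (t + 1) = (u / 2) ^ (t + 1) := by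
      intro t; rw [div_pow]; ring
    rw [tsum_congr h]
    have := tsum_geometric_of_abs_lt_one hr
    have hsum : ∑' t : ℕ, (u / 2) ^ (t + 1) = (u / 2) * ∑' t : ℕ, (u / 2) ^ t := by
      rw [← tsum_mul_left]; exact tsum_congr fun t => by ring
    rw [hsum, this]
    have h2 : (1:ℝ) - u / 2 ≠ 0 := by intro h; nlinarith
    field_simp
end

section
/- For the squirrel random walk driven by a renewal process with waiting-time generating function ψ̄, the generating function of the expected position satisfies Σ_{t=0}^∞ ⟨X_t⟩ u^t = σ̃₀·(1-ψ̄(u))/((1-u)²(1+ψ̄(u))) - σ̃₀/(1-u), where ⟨X_t⟩ = σ̃₀·Σ_{r=1}^t E[(-1)^{N(r)}]. -/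
open MeasureTheory ProbabilityTheory

private lemma signsum (m : ℕ) : ∑ n ∈ Finset.Icc 1 m, (-1:ℝ)^(n-1) = (1 - (-1:ℝ)^m)/2 := by
  induction m with
  | zero => simp
  | succ m ih =>
    rw [Finset.sum_Icc_succ_top (Nat.le_add_left 1 m), ih]
    simp only [Nat.add_sub_cancel, pow_succ]
    ring

private lemma sum_Icc_one (f : ℕ → ℝ) (t : ℕ) :
    ∑ n ∈ Finset.Icc 1 t, f n = ∑ i ∈ Finset.range t, f (i+1) := by
  induction t with
  | zero => simp
  | succ t ih =>
    rw [Finset.sum_Icc_succ_top (Nat.le_add_left 1 t), ih, Finset.sum_range_succ]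

private lemma tsum_ite_geom {x : ℝ} (hx : |x| < 1) (s : ℕ) :
    ∑' r : ℕ, (if s ≤ r then x ^ r else 0) = x ^ s * (1 - x)⁻¹ := by
  have hxabs : Summable fun r : ℕ => |x| ^ r :=
    summable_geometric_of_lt_one (abs_nonneg x) hx
  have hsum : Summable fun r : ℕ => (if s ≤ r then x ^ r else 0) := by
    apply Summable.of_norm_bounded hxabs
    intro r
    by_cases h : s ≤ r
    · rw [if_pos h, Real.norm_eq_abs, abs_pow]
    · rw [if_neg h, norm_zero]
      positivity
  rw [← Summable.sum_add_tsum_nat_add s hsum]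
  have h1 : ∑ i ∈ Finset.range s, (if s ≤ i then x ^ i else 0) = 0 := by
    apply Finset.sum_eq_zero
    intro i hi
    rw [Finset.mem_range] at hi
    rw [if_neg (by omega)]
  have h2 : ∀ i : ℕ, (if s ≤ i + s then x ^ (i + s) else 0) = x ^ s * x ^ i := by
    intro i
    rw [if_pos (Nat.le_add_left s i), pow_add]
    ring
  rw [h1, zero_add, tsum_congr h2, tsum_mul_left,
    tsum_geometric_of_norm_lt_one (by simpa using hx)]

private lemma filter_eq_Icc_card {r : ℕ} (p : ℕ → Prop) [DecidablePred p]
    (hmono : ∀ m n, 1 ≤ m → m ≤ n → p n → p m) :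
    (Finset.Icc 1 r).filter p = Finset.Icc 1 (((Finset.Icc 1 r).filter p).card) := by
  rcases ((Finset.Icc 1 r).filter p).eq_empty_or_nonempty with h | h
  · rw [h]; simp
  · have hk : (Finset.Icc 1 r).filter p
        = Finset.Icc 1 (((Finset.Icc 1 r).filter p).max' h) := by
      apply Finset.ext
      intro n
      rw [Finset.mem_filter, Finset.mem_Icc, Finset.mem_Icc]
      constructor
      · intro hn
        exact ⟨hn.1.1, Finset.le_max' _ n (Finset.mem_filter.mpr ⟨Finset.mem_Icc.mpr hn.1, hn.2⟩)⟩
      · intro hn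
        have hmax := Finset.max'_mem _ h
        rw [Finset.mem_filter, Finset.mem_Icc] at hmax
        exact ⟨⟨hn.1, le_trans hn.2 hmax.1.2⟩, hmono n _ hn.1 hn.2 hmax.2⟩
    have hcard : ((Finset.Icc 1 r).filter p).card = ((Finset.Icc 1 r).filter p).max' h := by
      conv_lhs => rw [hk]
      simp [Nat.card_Icc]
    rw [hcard]
    exact hk


set_option maxHeartbeats 1600000 in
/-- Generating function of the expected position of the squirrel random walk:
`Σ_t ⟨X_t⟩ u^t = σ̃₀ (1-ψ̄(u))/((1-u)²(1+ψ̄(u))) - σ̃₀/(1-u)`, where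
`⟨X_t⟩ = σ̃₀ Σ_{r=1}^t E[(-1)^{N(r)}]` and `N` is the renewal process with
i.i.d. waiting times of density `ψ` on `{1,2,...}`. -/
theorem stmt_13 {Ω : Type*} [MeasurableSpace Ω] (P : Measure Ω) [IsProbabilityMeasure P]
    (ψ : ℕ → ℝ) (hψ0 : ψ 0 = 0) (hψnn : ∀ k, 0 ≤ ψ k) (hψsum : ∑' k, ψ k = 1)
    (Δt : ℕ → Ω → ℕ) (hmeas : ∀ j, Measurable (Δt j))
    (hind : iIndepFun Δt P)
    (hpos : ∀ j ω, 1 ≤ Δt j ω)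
    (hdist : ∀ j k, P {ω | Δt j ω = k} = ENNReal.ofReal (ψ k))
    (N : ℕ → Ω → ℕ)
    (hN : ∀ t ω, N t ω = ((Finset.Icc 1 t).filter
        (fun n => (∑ j ∈ Finset.Icc 1 n, Δt j ω) ≤ t)).card)
    (σ0 : ℝ) (hσ0 : σ0 ∈ ({-1, 1} : Set ℝ)) :
    ∀ u : ℝ, |u| < 1 →
      ∑' t : ℕ,
          (σ0 * ∑ r ∈ Finset.Icc 1 t, ∫ ω, (-1 : ℝ) ^ (N r ω) ∂P) * u ^ t
        = σ0 * (1 - ∑' k, ψ k * u ^ k) /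
            ((1 - u) ^ 2 * (1 + ∑' k, ψ k * u ^ k)) - σ0 / (1 - u) := by
  intro u hu
  classical
  set ψb := ∑' k, ψ k * u ^ k with hψbdef
  have hu' : ‖u‖ < 1 := by simpa using hu
  have hune : (1:ℝ) - u ≠ 0 := by
    rcases abs_lt.mp hu with ⟨h1, h2⟩; intro h; linarith
  have hψsummable : Summable ψ := by
    by_contra h
    rw [tsum_eq_zero_of_not_summable h] at hψsum
    norm_num at hψsum
  have habsu : Summable fun k : ℕ => |u| ^ k :=
    summable_geometric_of_lt_one (abs_nonneg u) hu
  have hgeom : Summable fun k : ℕ => u ^ k := summable_geometric_of_norm_lt_one hu'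
  have hgeomt : ∑' k : ℕ, u ^ k = (1 - u)⁻¹ := tsum_geometric_of_norm_lt_one hu'
  have hψble : |ψb| ≤ |u| := by
    have hb : ∀ k, ‖ψ k * u ^ k‖ ≤ ψ k * |u| := by
      intro k
      rw [Real.norm_eq_abs, abs_mul, abs_of_nonneg (hψnn k), abs_pow]
      rcases Nat.eq_zero_or_pos k with hk | hk
      · simp [hk, hψ0]
      · exact mul_le_mul_of_nonneg_left
          (by simpa using pow_le_pow_of_le_one (abs_nonneg u) hu.le hk) (hψnn k)
    have hsum2 : Summable fun k : ℕ => ψ k * |u| := hψsummable.mul_right _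
    have hsumn : Summable fun k : ℕ => ‖ψ k * u ^ k‖ :=
      Summable.of_nonneg_of_le (fun k => norm_nonneg _) hb hsum2
    calc |ψb| ≤ ∑' k, ‖ψ k * u ^ k‖ := by
          rw [hψbdef, ← Real.norm_eq_abs]
          exact norm_tsum_le_tsum_norm hsumn
      _ ≤ ∑' k, ψ k * |u| := Summable.tsum_le_tsum hb hsumn hsum2
      _ = |u| := by rw [tsum_mul_right, hψsum, one_mul]
  have hψb1 : |ψb| < 1 := lt_of_le_of_lt hψble hu
  have h1ψ : (1:ℝ) + ψb ≠ 0 := by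
    rcases abs_lt.mp hψb1 with ⟨h1, h2⟩; intro h; linarith
  -- the partial sums
  set S : ℕ → Ω → ℕ := fun n ω => ∑ j ∈ Finset.Icc 1 n, Δt j ω with hSdef
  have hSmeas : ∀ n, Measurable (S n) := fun n =>
    Finset.measurable_sum _ fun j _ => hmeas j
  have hSmono : ∀ ω, Monotone fun n => S n ω := by
    intro ω n m h
    exact Finset.sum_le_sum_of_subset (Finset.Icc_subset_Icc_right h)
  have hSge : ∀ n ω, n ≤ S n ω := by
    intro n ω
    calc n = ∑ _j ∈ Finset.Icc 1 n, 1 := by simp [Nat.card_Icc]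
      _ ≤ S n ω := Finset.sum_le_sum fun j _ => hpos j ω
  set q : ℕ → ℕ → ℝ := fun n r => (P {ω | S n ω ≤ r}).toReal with hqdef
  have hAmeas : ∀ n r, MeasurableSet {ω | S n ω ≤ r} := fun n r =>
    measurableSet_le (hSmeas n) measurable_const
  have hq_nonneg : ∀ n r, 0 ≤ q n r := fun n r => ENNReal.toReal_nonneg
  have hq_le_one : ∀ n r, q n r ≤ 1 := by
    intro n r
    have h : P {ω | S n ω ≤ r} ≤ P Set.univ := measure_mono (Set.subset_univ _)
    rw [measure_univ] at h
    exact ENNReal.toReal_le_of_le_ofReal zero_le_one (by simpa using h)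
  have hq0 : ∀ n r, r < n → q n r = 0 := by
    intro n r h
    have hempty : {ω | S n ω ≤ r} = ∅ := by
      ext ω
      simp only [Set.mem_setOf_eq, Set.mem_empty_iff_false, iff_false, not_le]
      exact lt_of_lt_of_le h (hSge n ω)
    simp [hqdef, hempty]
  have hfilter : ∀ r ω, (Finset.Icc 1 r).filter (fun n => S n ω ≤ r)
      = Finset.Icc 1 (N r ω) := by
    intro r ω
    have hmono' : ∀ m n, 1 ≤ m → m ≤ n → S n ω ≤ r → S m ω ≤ r :=
      fun m n _ hmn hn => le_trans (hSmono ω hmn) hn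
    rw [hN r ω]
    exact filter_eq_Icc_card _ hmono'
  have hpoint : ∀ r ω, ((-1:ℝ)) ^ (N r ω)
      = 1 - 2 * ∑ n ∈ Finset.Icc 1 r, (-1:ℝ)^(n-1) * (if S n ω ≤ r then 1 else 0) := by
    intro r ω
    have h1 : ∑ n ∈ Finset.Icc 1 r, (-1:ℝ)^(n-1) * (if S n ω ≤ r then 1 else 0)
        = ∑ n ∈ (Finset.Icc 1 r).filter (fun n => S n ω ≤ r), (-1:ℝ)^(n-1) := by
      rw [Finset.sum_filter]
      refine Finset.sum_congr rfl fun n _ => ?_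
      by_cases h : S n ω ≤ r <;> simp [h]
    rw [h1, hfilter r ω, signsum]
    ring
  have hiteind : ∀ n r, (fun ω => if S n ω ≤ r then (1:ℝ) else 0)
      = Set.indicator {ω | S n ω ≤ r} (fun _ => 1) := by
    intro n r
    funext ω
    by_cases h : S n ω ≤ r <;> simp [Set.indicator_apply, h]
  have hInt : ∀ n r, Integrable (fun ω => if S n ω ≤ r then (1:ℝ) else 0) P := by
    intro n r
    rw [hiteind]
    exact (integrable_const 1).indicator (hAmeas n r)
  have hqint : ∀ n r, ∫ ω, (if S n ω ≤ r then (1:ℝ) else 0) ∂P = q n r := by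
    intro n r
    rw [hiteind n r]
    exact (integral_indicator_one (μ := P) (hAmeas n r)).trans (measureReal_def _ _)
  have ha : ∀ r, (∫ ω, (-1:ℝ) ^ (N r ω) ∂P)
      = 1 - 2 * ∑ n ∈ Finset.Icc 1 r, (-1:ℝ)^(n-1) * q n r := by
    intro r
    have hint2 : Integrable
        (fun ω => ∑ n ∈ Finset.Icc 1 r, (-1:ℝ)^(n-1) * (if S n ω ≤ r then 1 else 0)) P :=
      integrable_finset_sum _ fun n _ => (hInt n r).const_mul _
    calc ∫ ω, (-1:ℝ)^(N r ω) ∂P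
        = ∫ ω, (1 - 2 * ∑ n ∈ Finset.Icc 1 r,
            (-1:ℝ)^(n-1) * (if S n ω ≤ r then 1 else 0)) ∂P :=
          integral_congr_ae (Filter.Eventually.of_forall fun ω => hpoint r ω)
      _ = 1 - 2 * ∑ n ∈ Finset.Icc 1 r, (-1:ℝ)^(n-1) * q n r := by
          rw [integral_sub (integrable_const 1) (hint2.const_mul 2), integral_const,
            integral_const_mul, integral_finset_sum _ (fun n _ => (hInt n r).const_mul _)]
          simp only [integral_const_mul, hqint]
          simp
  have hudt : ∀ j, ∫ ω, u ^ (Δt j ω) ∂P = ψb := by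
    intro j
    haveI : IsProbabilityMeasure (P.map (Δt j)) :=
      Measure.isProbabilityMeasure_map (hmeas j).aemeasurable
    have hmu : Measurable fun x : ℕ => u ^ x := measurable_from_nat
    have hint : Integrable (fun x : ℕ => u ^ x) (P.map (Δt j)) := by
      refine (integrable_const (1:ℝ)).mono' hmu.aestronglyMeasurable ?_
      refine Filter.Eventually.of_forall fun x => ?_
      rw [Real.norm_eq_abs, abs_pow]
      exact pow_le_one₀ (abs_nonneg u) hu.le
    have h1 : ∫ ω, u ^ (Δt j ω) ∂P = ∫ x, u ^ x ∂(P.map (Δt j)) :=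
      (integral_map (hmeas j).aemeasurable hmu.aestronglyMeasurable).symm
    rw [h1, integral_countable' hint, hψbdef]
    refine tsum_congr fun a => ?_
    rw [measureReal_def, Measure.map_apply (hmeas j) (measurableSet_singleton a)]
    have h2 : Δt j ⁻¹' {a} = {ω | Δt j ω = a} := by ext ω; simp
    rw [h2, hdist, ENNReal.toReal_ofReal (hψnn a), smul_eq_mul]
  have hmu : Measurable fun x : ℕ => u ^ x := measurable_from_nat
  have hbound : ∀ f : Ω → ℕ, Measurable f → Integrable (fun ω => u ^ (f ω)) P := by
    intro f hf
    refine (integrable_const (1:ℝ)).mono' (hmu.comp hf).aestronglyMeasurable ?_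
    refine Filter.Eventually.of_forall fun ω => ?_
    rw [Real.norm_eq_abs, abs_pow]
    exact pow_le_one₀ (abs_nonneg u) hu.le
  have hE : ∀ n, ∫ ω, u ^ (S n ω) ∂P = ψb ^ n := by
    intro n
    induction n with
    | zero =>
      have h0 : ∀ ω, S 0 ω = 0 := by
        intro ω
        simp [hSdef]
      simp [h0]
    | succ n ih =>
      have hindep0 : IndepFun (S n) (Δt (n+1)) P := by
        have hni : (n+1) ∉ Finset.Icc 1 n := by simp
        have h := hind.indepFun_finsetSum_of_notMem hmeas hni
        have hfe : (∑ j ∈ Finset.Icc 1 n, Δt j) = S n := by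
          funext ω
          simp [hSdef, Finset.sum_apply]
        rwa [hfe] at h
      have hindep : IndepFun (fun ω => u ^ S n ω) (fun ω => u ^ Δt (n+1) ω) P :=
        hindep0.comp hmu hmu
      have hstep : ∀ ω, S (n+1) ω = S n ω + Δt (n+1) ω := by
        intro ω
        simp only [hSdef]
        exact Finset.sum_Icc_succ_top (by omega) _
      have hfeq : ∀ ω, u ^ S (n+1) ω = (u ^ S n ω) * (u ^ Δt (n+1) ω) := by
        intro ω
        rw [hstep ω, pow_add]
      calc ∫ ω, u ^ S (n+1) ω ∂P = ∫ ω, (u ^ S n ω) * (u ^ Δt (n+1) ω) ∂P :=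
            integral_congr_ae (Filter.Eventually.of_forall hfeq)
        _ = (∫ ω, u ^ S n ω ∂P) * ∫ ω, u ^ Δt (n+1) ω ∂P :=
            hindep.integral_fun_mul_eq_mul_integral (hbound _ (hSmeas n)).aestronglyMeasurable (hbound _ (hmeas (n+1))).aestronglyMeasurable
        _ = ψb ^ (n+1) := by rw [ih, hudt (n+1), pow_succ]
  have hQ : ∀ n, ∑' r : ℕ, u ^ r * q n r = ψb ^ n * (1 - u)⁻¹ := by
    intro n
    have hf : ∀ r : ℕ, AEStronglyMeasurable
        (fun ω => u ^ r * (if S n ω ≤ r then (1:ℝ) else 0)) P :=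
      fun r => (hInt n r).aestronglyMeasurable.const_mul _
    have h1 : ∀ r : ℕ, (∫⁻ ω, ‖u ^ r * (if S n ω ≤ r then (1:ℝ) else 0)‖₊ ∂P)
        ≤ ((‖u‖₊ : ENNReal) ^ r) := by
      intro r
      have hb : ∀ ω, (‖u ^ r * (if S n ω ≤ r then (1:ℝ) else 0)‖₊ : ENNReal)
          ≤ (‖u‖₊ : ENNReal) ^ r := by
        intro ω
        rw [← ENNReal.coe_pow]
        apply ENNReal.coe_le_coe.mpr
        calc ‖u ^ r * (if S n ω ≤ r then (1:ℝ) else 0)‖₊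
            = ‖(u:ℝ) ^ r‖₊ * ‖(if S n ω ≤ r then (1:ℝ) else 0)‖₊ := nnnorm_mul _ _
          _ ≤ ‖(u:ℝ) ^ r‖₊ * 1 := by
              apply mul_le_mul_right
              by_cases h : S n ω ≤ r <;> simp [h]
          _ = ‖u‖₊ ^ r := by rw [mul_one, nnnorm_pow]
      calc (∫⁻ ω, ‖u ^ r * (if S n ω ≤ r then (1:ℝ) else 0)‖₊ ∂P)
          ≤ ∫⁻ _, (‖u‖₊ : ENNReal) ^ r ∂P := lintegral_mono hb
        _ = (‖u‖₊ : ENNReal) ^ r := by rw [lintegral_const, measure_univ, mul_one]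
    have h2 : (∑' r : ℕ, ((‖u‖₊ : ENNReal) ^ r)) ≠ ⊤ := by
      have hs : Summable fun r : ℕ => (‖u‖₊ ^ r : NNReal) := by
        rw [← NNReal.summable_coe]
        simpa [NNReal.coe_pow, coe_nnnorm, Real.norm_eq_abs] using habsu
      simpa [ENNReal.coe_pow] using ENNReal.tsum_coe_ne_top_iff_summable.mpr hs
    have hbnd : (∑' r : ℕ, ∫⁻ ω, ‖u ^ r * (if S n ω ≤ r then (1:ℝ) else 0)‖₊ ∂P) ≠ ⊤ :=
      ne_top_of_le_ne_top h2 (ENNReal.tsum_le_tsum h1)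
    have hswap := integral_tsum hf hbnd
    calc ∑' r : ℕ, u ^ r * q n r
        = ∑' r : ℕ, ∫ ω, u ^ r * (if S n ω ≤ r then (1:ℝ) else 0) ∂P := by
          refine tsum_congr fun r => ?_
          rw [integral_const_mul, hqint]
      _ = ∫ ω, ∑' r : ℕ, u ^ r * (if S n ω ≤ r then (1:ℝ) else 0) ∂P := hswap.symm
      _ = ∫ ω, u ^ (S n ω) * (1-u)⁻¹ ∂P := by
          have hfeq : ∀ ω, (∑' r : ℕ, u ^ r * (if S n ω ≤ r then (1:ℝ) else 0))
              = u ^ (S n ω) * (1-u)⁻¹ := by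
            intro ω
            have hterm : ∀ r : ℕ, u ^ r * (if S n ω ≤ r then (1:ℝ) else 0)
                = (if S n ω ≤ r then u ^ r else 0) := by
              intro r
              by_cases h : S n ω ≤ r <;> simp [h]
            rw [tsum_congr hterm, tsum_ite_geom hu (S n ω)]
          exact integral_congr_ae (Filter.Eventually.of_forall hfeq)
      _ = ψb ^ n * (1-u)⁻¹ := by rw [integral_mul_const, hE n]
  have hqsummable : ∀ n, Summable fun r : ℕ => u ^ r * q n r := by
    intro n
    apply Summable.of_norm_bounded habsu
    intro r
    rw [Real.norm_eq_abs, abs_mul, abs_pow]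
    calc |u|^r * |q n r| ≤ |u|^r * 1 := by
          apply mul_le_mul_of_nonneg_left _ (pow_nonneg (abs_nonneg u) r)
          rw [abs_of_nonneg (hq_nonneg n r)]
          exact hq_le_one n r
      _ = |u|^r := mul_one _
  -- double sum over (m, r)
  set g : ℕ → ℕ → ℝ := fun m r => (-1:ℝ)^m * (u ^ r * q (m+1) r) with hgdef
  have hz : ∀ r : ℕ, ∀ m ∉ Finset.range r, g m r = 0 := by
    intro r m hm
    rw [Finset.mem_range, not_lt] at hm
    simp [hgdef, hq0 (m+1) r (by omega)]
  have hgr : ∀ r, ∑' m, g m r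
      = (∑ n ∈ Finset.Icc 1 r, (-1:ℝ)^(n-1) * q n r) * u ^ r := by
    intro r
    rw [tsum_eq_sum (hz r), sum_Icc_one, Finset.sum_mul]
    refine Finset.sum_congr rfl fun m _ => ?_
    simp only [hgdef, Nat.add_sub_cancel]
    ring
  have hgm : ∀ m, ∑' r, g m r = (-1:ℝ)^m * (ψb^(m+1) * (1-u)⁻¹) := by
    intro m
    simp only [hgdef]
    rw [tsum_mul_left, hQ (m+1)]
  have hGsum : Summable (fun p : ℕ × ℕ => g p.1 p.2) := by
    have hGb : Summable (fun p : ℕ × ℕ => if p.1 + 1 ≤ p.2 then |u| ^ p.2 else 0) := by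
      apply (summable_prod_of_nonneg ?_).mpr
      · constructor
        · intro m
          apply Summable.of_norm_bounded habsu
          intro r
          by_cases h : m + 1 ≤ r
          · rw [if_pos h, Real.norm_eq_abs, abs_of_nonneg (by positivity)]
          · rw [if_neg h, norm_zero]
            positivity
        · have hval : ∀ m : ℕ, (∑' r : ℕ, if m + 1 ≤ r then |u| ^ r else 0)
              = |u|^(m+1) * (1-|u|)⁻¹ := by
            intro m
            exact tsum_ite_geom (by rwa [abs_abs]) (m+1)
          refine Summable.congr ((habsu.mul_right ((1-|u|)⁻¹)).mul_left |u|) fun m => ?_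
          rw [hval m, pow_succ]
          ring
      · intro p
        dsimp only
        split
        · positivity
        · exact le_refl 0
    apply Summable.of_norm_bounded hGb
    intro p
    by_cases h : p.1 + 1 ≤ p.2
    · rw [if_pos h]
      simp only [hgdef]
      rw [Real.norm_eq_abs, abs_mul, abs_mul, abs_pow, abs_pow, abs_neg, abs_one, one_pow,
        one_mul, abs_of_nonneg (hq_nonneg _ _)]
      calc |u| ^ p.2 * q (p.1 + 1) p.2 ≤ |u| ^ p.2 * 1 :=
            mul_le_mul_of_nonneg_left (hq_le_one _ _) (by positivity)
        _ = |u| ^ p.2 := mul_one _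
    · rw [if_neg h]
      have : g p.1 p.2 = 0 := by
        simp [hgdef, hq0 (p.1+1) p.2 (by omega)]
      rw [this, norm_zero]
  set Sg : ℝ := ∑' p : ℕ × ℕ, g p.1 p.2 with hSgdef
  have hfib1 : ∀ r, HasSum (fun m => g m r)
      ((∑ n ∈ Finset.Icc 1 r, (-1:ℝ)^(n-1) * q n r) * u ^ r) := by
    intro r
    exact (summable_of_ne_finset_zero (hz r)).hasSum_iff.mpr (hgr r)
  have hswap1 : HasSum (fun r => (∑ n ∈ Finset.Icc 1 r, (-1:ℝ)^(n-1) * q n r) * u ^ r) Sg := by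
    have hGswap : Summable fun p : ℕ × ℕ => g p.2 p.1 :=
      (Equiv.prodComm ℕ ℕ).summable_iff.mpr hGsum
    have hts : (∑' p : ℕ × ℕ, g p.2 p.1) = Sg := by
      rw [hSgdef]
      exact (Equiv.prodComm ℕ ℕ).tsum_eq (fun p : ℕ × ℕ => g p.1 p.2)
    have h1 : HasSum (fun p : ℕ × ℕ => g p.2 p.1) Sg := by
      have h := hGswap.hasSum
      rwa [hts] at h
    exact h1.prod_fiberwise hfib1
  have hswap2 : HasSum (fun m => (-1:ℝ)^m * (ψb^(m+1) * (1-u)⁻¹)) Sg := by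
    have h2 : HasSum (fun p : ℕ × ℕ => g p.1 p.2) Sg := by
      have h := hGsum.hasSum
      rwa [← hSgdef] at h
    refine h2.prod_fiberwise fun m => ?_
    have hs : Summable fun r => g m r := (hqsummable (m+1)).mul_left ((-1:ℝ)^m)
    exact (Summable.hasSum_iff hs).mpr (hgm m)
  have hSgval : Sg = ψb * ((1 + ψb)⁻¹ * (1-u)⁻¹) := by
    rw [← hswap2.tsum_eq]
    have hterm : ∀ m : ℕ, (-1:ℝ)^m * (ψb^(m+1) * (1-u)⁻¹)
        = (-ψb)^m * (ψb * (1-u)⁻¹) := by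
      intro m
      rw [neg_pow, pow_succ]
      ring
    rw [tsum_congr hterm, tsum_mul_right,
      tsum_geometric_of_norm_lt_one (by rw [norm_neg, Real.norm_eq_abs]; exact hψb1),
      sub_neg_eq_add]
    ring
  -- the series Σ a_r u^r
  have hA : HasSum (fun r => (∫ ω, (-1:ℝ) ^ (N r ω) ∂P) * u ^ r) ((1-u)⁻¹ - 2 * Sg) := by
    have h1 : HasSum (fun r : ℕ => u ^ r) (1-u)⁻¹ := hasSum_geometric_of_norm_lt_one hu'
    have h3 := h1.sub (hswap1.mul_left 2)
    have heq : ∀ r, (∫ ω, (-1:ℝ)^(N r ω) ∂P) * u ^ r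
        = u ^ r - 2 * ((∑ n ∈ Finset.Icc 1 r, (-1:ℝ)^(n-1) * q n r) * u ^ r) := by
      intro r
      rw [ha r]
      ring
    simp only [heq]
    exact h3
  have hanorm : Summable fun r => ‖(∫ ω, (-1:ℝ) ^ (N r ω) ∂P) * u ^ r‖ := by
    have habs1 : ∀ r, |∫ ω, (-1:ℝ)^(N r ω) ∂P| ≤ 1 := by
      intro r
      rw [← Real.norm_eq_abs]
      calc ‖∫ ω, (-1:ℝ)^(N r ω) ∂P‖ ≤ ∫ ω, ‖(-1:ℝ)^(N r ω)‖ ∂P :=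
            norm_integral_le_integral_norm _
        _ = 1 := by simp [Real.norm_eq_abs, abs_pow]
    apply Summable.of_nonneg_of_le (fun r => norm_nonneg _) _ habsu
    intro r
    rw [Real.norm_eq_abs, abs_mul, abs_pow]
    calc |∫ ω, (-1:ℝ)^(N r ω) ∂P| * |u|^r ≤ 1 * |u|^r :=
          mul_le_mul_of_nonneg_right (habs1 r) (by positivity)
      _ = |u|^r := one_mul _
  have hgnorm : Summable fun s : ℕ => ‖u ^ s‖ := by
    simpa [Real.norm_eq_abs, abs_pow] using habsu
  -- Cauchy product
  have hCauchy : (∑' r, (∫ ω, (-1:ℝ) ^ (N r ω) ∂P) * u ^ r) * (∑' s : ℕ, u ^ s)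
      = ∑' n : ℕ, (∑ r ∈ Finset.range (n+1), ∫ ω, (-1:ℝ) ^ (N r ω) ∂P) * u ^ n := by
    rw [tsum_mul_tsum_eq_tsum_sum_range_of_summable_norm hanorm hgnorm]
    refine tsum_congr fun n => ?_
    rw [Finset.sum_mul]
    refine Finset.sum_congr rfl fun k hk => ?_
    rw [Finset.mem_range, Nat.lt_succ_iff] at hk
    rw [mul_assoc, ← pow_add, Nat.add_sub_cancel' hk]
  have hCsummable : Summable fun n : ℕ =>
      (∑ r ∈ Finset.range (n+1), ∫ ω, (-1:ℝ) ^ (N r ω) ∂P) * u ^ n := by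
    refine ((summable_norm_sum_mul_range_of_summable_norm hanorm hgnorm).of_norm).congr
      fun n => ?_
    rw [Finset.sum_mul]
    refine Finset.sum_congr rfl fun k hk => ?_
    rw [Finset.mem_range, Nat.lt_succ_iff] at hk
    rw [mul_assoc, ← pow_add, Nat.add_sub_cancel' hk]
  have ha0 : (∫ ω, (-1:ℝ) ^ (N 0 ω) ∂P) = 1 := by
    have hN0 : ∀ ω, N 0 ω = 0 := by
      intro ω
      rw [hN 0 ω, Finset.Icc_eq_empty (by omega), Finset.filter_empty, Finset.card_empty]
    simp [hN0]
  have hsplit : ∀ t, (σ0 * ∑ r ∈ Finset.Icc 1 t, ∫ ω, (-1:ℝ) ^ (N r ω) ∂P) * u ^ t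
      = σ0 * ((∑ r ∈ Finset.range (t+1), ∫ ω, (-1:ℝ) ^ (N r ω) ∂P) * u ^ t - u ^ t) := by
    intro t
    have h1 : ∑ r ∈ Finset.range (t+1), ∫ ω, (-1:ℝ)^(N r ω) ∂P
        = (∑ r ∈ Finset.Icc 1 t, ∫ ω, (-1:ℝ)^(N r ω) ∂P) + 1 := by
      rw [sum_Icc_one (fun r => ∫ ω, (-1:ℝ)^(N r ω) ∂P) t,
        Finset.sum_range_succ' (fun r => ∫ ω, (-1:ℝ)^(N r ω) ∂P) t]
      norm_num [ha0]
    rw [h1]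
    ring
  calc ∑' t : ℕ, (σ0 * ∑ r ∈ Finset.Icc 1 t, ∫ ω, (-1:ℝ) ^ (N r ω) ∂P) * u ^ t
      = ∑' t : ℕ, σ0 * ((∑ r ∈ Finset.range (t+1), ∫ ω, (-1:ℝ) ^ (N r ω) ∂P) * u ^ t - u ^ t) :=
        tsum_congr hsplit
    _ = σ0 * ∑' t : ℕ, ((∑ r ∈ Finset.range (t+1), ∫ ω, (-1:ℝ) ^ (N r ω) ∂P) * u ^ t - u ^ t) :=
        tsum_mul_left
    _ = σ0 * ((∑' t : ℕ, (∑ r ∈ Finset.range (t+1), ∫ ω, (-1:ℝ) ^ (N r ω) ∂P) * u ^ t)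
          - ∑' t : ℕ, u ^ t) := by rw [Summable.tsum_sub hCsummable hgeom]
    _ = σ0 * (((1-u)⁻¹ - 2 * Sg) * (1-u)⁻¹ - (1-u)⁻¹) := by
        rw [← hCauchy, hA.tsum_eq, hgeomt]
    _ = σ0 * (1 - ψb) / ((1 - u) ^ 2 * (1 + ψb)) - σ0 / (1 - u) := by
        rw [hSgval]
        field_simp
        ring
end
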